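/- Let n ≥ 4 and let D be the distance matrix of the triangular graph Tₙ. Then the eigenvalues of D are: (n−1)(n−2) with multiplicity 1, −(n−2) with multiplicity n−1, and 0 with multiplicity C(n,2) − n, where C(n,2) = n(n−1)/2. -/

import Mathlib

/-- The triangular graph `Tₙ`, the line graph of `Kₙ`: vertices are the 2-element subsets
of an `n`-element set, adjacent iff they intersect. -/
def triangularGraph (n : ℕ) : SimpleGraph {s : Finset (Fin n) // s.card = 2} where
  Adj a b := a ≠ b ∧ (a.1 ∩ b.1).Nonempty
  symm := ⟨by
    rintro a b ⟨h1, h2⟩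
    exact ⟨h1.symm, by rwa [Finset.inter_comm]⟩⟩
  loopless := ⟨by rintro a ⟨h1, _⟩; exact h1 rfl⟩

/-- The distance matrix of a graph `G`, as a real matrix. -/
noncomputable def distMatrix {V : Type*} [Fintype V] (G : SimpleGraph V) : Matrix V V ℝ :=
  Matrix.of fun u v => (G.dist u v : ℝ)

theorem distMatrix_isHermitian {V : Type*} [Fintype V] (G : SimpleGraph V) :
    (distMatrix G).IsHermitian := by
  unfold Matrix.IsHermitian
  ext u v
  simp [distMatrix, Matrix.conjTranspose_apply, SimpleGraph.dist_comm]

namespace TG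

variable {n : ℕ}

abbrev V (n : ℕ) := {s : Finset (Fin n) // s.card = 2}

instance : DecidableRel (triangularGraph n).Adj := fun a b => by
  unfold triangularGraph; exact instDecidableAnd

open Finset Matrix

lemma card_filter_V (p : Finset (Fin n) → Prop) [DecidablePred p] :
    (Finset.univ.filter fun w : V n => p w.1).card
      = (((Finset.univ : Finset (Fin n)).powersetCard 2).filter p).card := by
  apply Finset.card_bij (fun w _ => w.1)
  · intro w hw
    simp only [Finset.mem_filter, Finset.mem_powersetCard_univ]
    exact ⟨w.2, (Finset.mem_filter.1 hw).2⟩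
  · intro a ha b hb h; exact Subtype.ext h
  · intro s hs
    simp only [Finset.mem_filter, Finset.mem_powersetCard_univ] at hs
    exact ⟨⟨s, hs.1⟩, by simp [hs.2], rfl⟩

lemma card_avoid (S : Finset (Fin n)) :
    ((((Finset.univ : Finset (Fin n)).powersetCard 2)).filter fun w => w ∩ S = ∅).card
      = (n - S.card).choose 2 := by
  have : (((Finset.univ : Finset (Fin n)).powersetCard 2).filter fun w => w ∩ S = ∅)
      = Sᶜ.powersetCard 2 := by
    ext w
    simp only [Finset.mem_filter, Finset.mem_powersetCard_univ, Finset.mem_powersetCard]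
    constructor
    · rintro ⟨⟨-, h2⟩, h3⟩
      refine ⟨fun x hx => Finset.mem_compl.2 fun hxS => ?_, h2⟩
      exact Finset.notMem_empty x (h3 ▸ Finset.mem_inter.2 ⟨hx, hxS⟩)
    · rintro ⟨h1, h2⟩
      refine ⟨⟨Finset.subset_univ w, h2⟩, Finset.eq_empty_iff_forall_notMem.2 fun x hx => ?_⟩
      have := Finset.mem_inter.1 hx
      exact Finset.mem_compl.1 (h1 this.1) this.2
  rw [this, Finset.card_powersetCard, Finset.card_compl, Fintype.card_fin]

/-- inclusion-exclusion count of 2-subsets meeting both u and v -/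
lemma card_meets_both (u v : Finset (Fin n)) :
    ((((Finset.univ : Finset (Fin n)).powersetCard 2)).filter
        fun w => (w ∩ u).Nonempty ∧ (w ∩ v).Nonempty).card
      + (n - u.card).choose 2 + (n - v.card).choose 2
      = n.choose 2 + (n - (u ∪ v).card).choose 2 := by
  classical
  set P2 := ((Finset.univ : Finset (Fin n)).powersetCard 2)
  have hPcard : P2.card = n.choose 2 := by
    simp [P2, Finset.card_powersetCard]
  set a := P2.filter fun w => w ∩ u = ∅ with ha
  set b := P2.filter fun w => w ∩ v = ∅ with hb
  have hab : a ∩ b = P2.filter fun w => w ∩ (u ∪ v) = ∅ := by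
    rw [ha, hb, ← Finset.filter_and]
    apply Finset.filter_congr
    intro w _
    simp [Finset.inter_union_distrib_left, Finset.union_eq_empty]
  have haub : a ∪ b = P2.filter fun w => ¬ ((w ∩ u).Nonempty ∧ (w ∩ v).Nonempty) := by
    rw [ha, hb, ← Finset.filter_or]
    apply Finset.filter_congr
    intro w _
    rw [not_and_or]
    simp [Finset.not_nonempty_iff_eq_empty]
  have h1 : (P2.filter fun w => (w ∩ u).Nonempty ∧ (w ∩ v).Nonempty).card + (a ∪ b).card
      = P2.card := by
    rw [haub, Finset.card_filter_add_card_filter_not]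
  have h2 := Finset.card_union_add_card_inter a b
  have h3 : a.card = (n - u.card).choose 2 := card_avoid u
  have h4 : b.card = (n - v.card).choose 2 := card_avoid v
  have h5 : (a ∩ b).card = (n - (u ∪ v).card).choose 2 := by rw [hab]; exact card_avoid (u ∪ v)
  omega

end TG

-- chunk 2: distance lemmas, appended for testing
namespace TG
open Finset Matrix SimpleGraph

variable {n : ℕ}

lemma dist_eq_two (hn : 4 ≤ n) (u v : V n) (huv : u ≠ v)
    (hdis : u.1 ∩ v.1 = ∅) : (triangularGraph n).dist u v = 2 := by
  obtain ⟨x, hx⟩ := Finset.card_pos.1 (by rw [u.2]; norm_num)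
  obtain ⟨y, hy⟩ := Finset.card_pos.1 (by rw [v.2]; norm_num)
  have hxy : x ≠ y := by
    rintro rfl
    exact Finset.notMem_empty x (hdis ▸ Finset.mem_inter.2 ⟨hx, hy⟩)
  have hwcard : ({x, y} : Finset (Fin n)).card = 2 := by
    rw [Finset.card_insert_of_notMem (by simpa using hxy), Finset.card_singleton]
  set w : V n := ⟨{x, y}, hwcard⟩ with hw
  have h1 : (triangularGraph n).Adj u w := by
    refine ⟨?_, ⟨x, Finset.mem_inter.2 ⟨hx, by simp [hw]⟩⟩⟩
    intro h
    have : y ∈ u.1 := by rw [h]; simp [hw]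
    exact Finset.notMem_empty y (hdis ▸ Finset.mem_inter.2 ⟨this, hy⟩)
  have h2 : (triangularGraph n).Adj w v := by
    refine ⟨?_, ⟨y, Finset.mem_inter.2 ⟨by simp [hw], hy⟩⟩⟩
    intro h
    have : x ∈ v.1 := by rw [← h]; simp [hw]
    exact Finset.notMem_empty x (hdis ▸ Finset.mem_inter.2 ⟨hx, this⟩)
  have hle : (triangularGraph n).dist u v ≤ 2 := by
    simpa using SimpleGraph.dist_le (Walk.cons h1 (Walk.cons h2 Walk.nil))
  have hne0 : (triangularGraph n).dist u v ≠ 0 := fun h =>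
    huv ((SimpleGraph.Reachable.dist_eq_zero_iff
      ⟨Walk.cons h1 (Walk.cons h2 Walk.nil)⟩).1 h)
  have hne1 : (triangularGraph n).dist u v ≠ 1 := by
    intro h
    obtain ⟨-, hne⟩ := (SimpleGraph.dist_eq_one_iff_adj).1 h
    rw [hdis] at hne
    exact Finset.not_nonempty_empty hne
  omega

/-- all-ones matrix -/
def Jmat (n : ℕ) : Matrix (V n) (V n) ℝ := Matrix.of fun _ _ => 1

lemma distMatrix_eq (hn : 4 ≤ n) :
    distMatrix (triangularGraph n)
      = (2 : ℝ) • Jmat n - (2 : ℝ) • 1 - (triangularGraph n).adjMatrix ℝ := by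
  ext u v
  simp only [distMatrix, Matrix.of_apply, Matrix.sub_apply, Matrix.smul_apply, Jmat,
    Matrix.one_apply, SimpleGraph.adjMatrix_apply, smul_eq_mul, mul_one]
  by_cases h : u = v
  · subst h
    simp [SimpleGraph.dist_self, (triangularGraph n).loopless.irrefl u]
  · by_cases hadj : (triangularGraph n).Adj u v
    · rw [(SimpleGraph.dist_eq_one_iff_adj).2 hadj]
      simp [h, hadj]
      norm_num
    · have hdis : u.1 ∩ v.1 = ∅ := by
        by_contra hne
        exact hadj ⟨h, Finset.nonempty_iff_ne_empty.2 hne⟩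
      rw [dist_eq_two hn u v h hdis]
      simp [h, hadj]

end TG
-- chunk 3: adjacency matrix identities
namespace TG
open Finset Matrix SimpleGraph

variable {n : ℕ}

lemma cast_ch (k : ℕ) (hk : k ≤ n) :
    (((n - k).choose 2 : ℕ) : ℝ) = ((n : ℝ) - k) * ((n : ℝ) - k - 1) / 2 := by
  rw [Nat.cast_choose_two, Nat.cast_sub hk]

lemma inter_card_one {u v : V n} (h : u ≠ v) (hne : (u.1 ∩ v.1).Nonempty) :
    (u.1 ∩ v.1).card = 1 := by
  have h1 : 1 ≤ (u.1 ∩ v.1).card := Finset.card_pos.2 hne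
  have h2 : (u.1 ∩ v.1).card ≤ 2 := by
    calc (u.1 ∩ v.1).card ≤ u.1.card := Finset.card_le_card Finset.inter_subset_left
    _ = 2 := u.2
  have h3 : (u.1 ∩ v.1).card ≠ 2 := by
    intro hc
    have e1 : u.1 ∩ v.1 = u.1 :=
      Finset.eq_of_subset_of_card_le Finset.inter_subset_left (by rw [u.2, hc])
    have e2 : u.1 ∩ v.1 = v.1 :=
      Finset.eq_of_subset_of_card_le Finset.inter_subset_right (by rw [v.2, hc])
    exact h (Subtype.ext (e1 ▸ e2))
  omega

lemma AA_apply (u v : V n) :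
    ((triangularGraph n).adjMatrix ℝ * (triangularGraph n).adjMatrix ℝ) u v
      = ((Finset.univ.filter fun w : V n =>
          (triangularGraph n).Adj u w ∧ (triangularGraph n).Adj w v).card : ℝ) := by
  rw [Matrix.mul_apply, Finset.card_filter]
  push_cast
  apply Finset.sum_congr rfl
  intro w _
  by_cases h1 : (triangularGraph n).Adj u w <;>
    by_cases h2 : (triangularGraph n).Adj w v <;> simp [h1, h2]

lemma common_count (u v : V n) :
    (Finset.univ.filter fun w : V n =>
        (triangularGraph n).Adj u w ∧ (triangularGraph n).Adj w v).card
      = ((((Finset.univ : Finset (Fin n)).powersetCard 2).filter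
          fun s => (s ∩ u.1).Nonempty ∧ (s ∩ v.1).Nonempty) \ {u.1, v.1}).card := by
  have h1 : (Finset.univ.filter fun w : V n =>
        (triangularGraph n).Adj u w ∧ (triangularGraph n).Adj w v)
      = (Finset.univ.filter fun w : V n =>
          (w.1 ∩ u.1).Nonempty ∧ (w.1 ∩ v.1).Nonempty ∧ w.1 ≠ u.1 ∧ w.1 ≠ v.1) := by
    apply Finset.filter_congr
    intro w _
    constructor
    · rintro ⟨⟨hne1, hi1⟩, ⟨hne2, hi2⟩⟩
      exact ⟨by rwa [Finset.inter_comm], hi2,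
        fun h => hne1 (Subtype.ext h.symm), fun h => hne2 (Subtype.ext h)⟩
    · rintro ⟨hi1, hi2, hne1, hne2⟩
      exact ⟨⟨fun h => hne1 (congrArg Subtype.val h).symm, by rwa [Finset.inter_comm]⟩,
        ⟨fun h => hne2 (congrArg Subtype.val h), hi2⟩⟩
  rw [h1, card_filter_V (fun s => (s ∩ u.1).Nonempty ∧ (s ∩ v.1).Nonempty ∧ s ≠ u.1 ∧ s ≠ v.1)]
  congr 1
  ext s
  simp only [Finset.mem_filter, Finset.mem_sdiff, Finset.mem_insert, Finset.mem_singleton]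
  tauto

lemma A_sq (hn : 4 ≤ n) :
    (triangularGraph n).adjMatrix ℝ * (triangularGraph n).adjMatrix ℝ
      = (2 * (n : ℝ) - 8) • 1 + ((n : ℝ) - 6) • (triangularGraph n).adjMatrix ℝ
        + (4 : ℝ) • Jmat n := by
  have c0 : ((n.choose 2 : ℕ) : ℝ) = (n : ℝ) * ((n : ℝ) - 1) / 2 := by
    rw [Nat.cast_choose_two]
  have c2 := cast_ch (n := n) 2 (by omega)
  have c3 := cast_ch (n := n) 3 (by omega)
  have c4 := cast_ch (n := n) 4 (by omega)
  ext u v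
  rw [AA_apply]
  rw [common_count]
  set M := (((Finset.univ : Finset (Fin n)).powersetCard 2).filter
      fun s => (s ∩ u.1).Nonempty ∧ (s ∩ v.1).Nonempty) with hM
  have key := card_meets_both u.1 v.1
  rw [← hM] at key
  have humem : u.1 ∈ ((Finset.univ : Finset (Fin n)).powersetCard 2) :=
    Finset.mem_powersetCard_univ.2 u.2
  have hvmem : v.1 ∈ ((Finset.univ : Finset (Fin n)).powersetCard 2) :=
    Finset.mem_powersetCard_univ.2 v.2
  have hune : u.1.Nonempty := Finset.card_pos.1 (by rw [u.2]; norm_num)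
  have hvne : v.1.Nonempty := Finset.card_pos.1 (by rw [v.2]; norm_num)
  rw [u.2, v.2] at key
  by_cases huv : u = v
  · -- diagonal case
    subst huv
    rw [Finset.union_self, u.2] at key
    have hsub : {u.1} ⊆ M := by
      simp only [Finset.singleton_subset_iff, hM, Finset.mem_filter]
      exact ⟨humem, by simpa using hune, by simpa using hune⟩
    have hcard : (M \ {u.1, u.1}).card + 1 = M.card := by
      have h := Finset.card_sdiff_add_card_eq_card hsub
      rw [Finset.pair_eq_singleton]
      simpa using h
    simp only [Matrix.add_apply, Matrix.smul_apply, Matrix.one_apply_eq,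
      SimpleGraph.adjMatrix_apply, Jmat, Matrix.of_apply, smul_eq_mul]
    rw [if_neg ((triangularGraph n).loopless.irrefl u)]
    have hc : ((M \ {u.1, u.1}).card : ℝ) + 1 = (M.card : ℝ) := by exact_mod_cast hcard
    have hkey : (M.card : ℝ) + (((n - 2).choose 2 : ℕ) : ℝ) + (((n - 2).choose 2 : ℕ) : ℝ)
        = ((n.choose 2 : ℕ) : ℝ) + (((n - 2).choose 2 : ℕ) : ℝ) := by exact_mod_cast key
    rw [c0, c2] at hkey
    push_cast at hkey hc ⊢
    linarith [hkey, hc]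
  · have huv' : u.1 ≠ v.1 := fun h => huv (Subtype.ext h)
    have hone : (1 : Matrix (V n) (V n) ℝ) u v = 0 := Matrix.one_apply_ne huv
    by_cases hadj : (u.1 ∩ v.1).Nonempty
    · -- adjacent case
      have hadj' : (triangularGraph n).Adj u v := ⟨huv, hadj⟩
      have hsub : {u.1, v.1} ⊆ M := by
        intro s hs
        simp only [Finset.mem_insert, Finset.mem_singleton] at hs
        rcases hs with rfl | rfl
        · exact Finset.mem_filter.2 ⟨humem, by simpa using hune, hadj⟩
        · exact Finset.mem_filter.2 ⟨hvmem, by rwa [Finset.inter_comm], by simpa using hvne⟩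
      have hcard : (M \ {u.1, v.1}).card + 2 = M.card := by
        have h := Finset.card_sdiff_add_card_eq_card hsub
        rwa [Finset.card_pair huv'] at h
      have hcup : (u.1 ∪ v.1).card = 3 := by
        have h := Finset.card_union_add_card_inter u.1 v.1
        rw [u.2, v.2, inter_card_one huv hadj] at h
        omega
      rw [hcup] at key
      simp only [Matrix.add_apply, Matrix.smul_apply, SimpleGraph.adjMatrix_apply,
        Jmat, Matrix.of_apply, smul_eq_mul, hone]
      rw [if_pos hadj']
      have hc : ((M \ {u.1, v.1}).card : ℝ) + 2 = (M.card : ℝ) := by exact_mod_cast hcard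
      have hkey : (M.card : ℝ) + (((n - 2).choose 2 : ℕ) : ℝ) + (((n - 2).choose 2 : ℕ) : ℝ)
          = ((n.choose 2 : ℕ) : ℝ) + (((n - 3).choose 2 : ℕ) : ℝ) := by exact_mod_cast key
      rw [c0, c2, c3] at hkey
      push_cast at hkey hc ⊢
      linarith [hkey, hc]
    · -- disjoint case
      have hdis : u.1 ∩ v.1 = ∅ := Finset.not_nonempty_iff_eq_empty.1 hadj
      have hnadj : ¬ (triangularGraph n).Adj u v := fun h => hadj h.2
      have hsd : M \ {u.1, v.1} = M := by
        apply Finset.sdiff_eq_self_of_disjoint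
        rw [Finset.disjoint_right]
        intro s hmem hs
        simp only [Finset.mem_insert, Finset.mem_singleton] at hmem
        obtain ⟨-, h1, h2⟩ := Finset.mem_filter.1 hs
        rcases hmem with rfl | rfl
        · obtain ⟨x, hx⟩ := h2
          rw [Finset.mem_inter] at hx
          exact Finset.notMem_empty x (hdis ▸ Finset.mem_inter.2 hx)
        · obtain ⟨x, hx⟩ := h1
          rw [Finset.mem_inter] at hx
          exact Finset.notMem_empty x (hdis ▸ Finset.mem_inter.2 ⟨hx.2, hx.1⟩)
      have hcup : (u.1 ∪ v.1).card = 4 := by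
        have h := Finset.card_union_add_card_inter u.1 v.1
        rw [u.2, v.2, hdis] at h
        simpa using h
      rw [hcup] at key
      simp only [Matrix.add_apply, Matrix.smul_apply, SimpleGraph.adjMatrix_apply,
        Jmat, Matrix.of_apply, smul_eq_mul, hone]
      rw [if_neg hnadj, hsd]
      have hkey : (M.card : ℝ) + (((n - 2).choose 2 : ℕ) : ℝ) + (((n - 2).choose 2 : ℕ) : ℝ)
          = ((n.choose 2 : ℕ) : ℝ) + (((n - 4).choose 2 : ℕ) : ℝ) := by exact_mod_cast key
      rw [c0, c2, c4] at hkey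
      push_cast at hkey ⊢
      linarith [hkey]

end TG
-- chunk 4: J identities and key identities for D
namespace TG
open Finset Matrix SimpleGraph

variable {n : ℕ}

lemma deg_real (hn : 4 ≤ n) (u : V n) :
    ((Finset.univ.filter fun w : V n => (triangularGraph n).Adj u w).card : ℝ)
      = 2 * (n : ℝ) - 4 := by
  have h1 : ((triangularGraph n).adjMatrix ℝ * (triangularGraph n).adjMatrix ℝ) u u
      = 2 * (n : ℝ) - 4 := by
    rw [A_sq hn]
    simp only [Matrix.add_apply, Matrix.smul_apply, Matrix.one_apply_eq,
      SimpleGraph.adjMatrix_apply, Jmat, Matrix.of_apply, smul_eq_mul]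
    rw [if_neg ((triangularGraph n).loopless.irrefl u)]
    ring
  rw [AA_apply u u] at h1
  rw [← h1]
  congr 2
  apply Finset.filter_congr
  intro w _
  constructor
  · exact fun h => ⟨h, h.symm⟩
  · exact fun h => h.1

lemma card_V_eq : Fintype.card (V n) = n.choose 2 := by
  have h := card_filter_V (n := n) (fun _ => True)
  simpa [Finset.filter_true, Finset.card_powersetCard] using h

lemma A_mul_J (hn : 4 ≤ n) :
    (triangularGraph n).adjMatrix ℝ * Jmat n = (2 * (n : ℝ) - 4) • Jmat n := by
  ext u v
  rw [Matrix.mul_apply]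
  simp only [Jmat, Matrix.of_apply, Matrix.smul_apply, smul_eq_mul, mul_one,
    SimpleGraph.adjMatrix_apply]
  rw [← deg_real hn u, Finset.card_filter]
  push_cast
  rfl

lemma J_mul_A (hn : 4 ≤ n) :
    Jmat n * (triangularGraph n).adjMatrix ℝ = (2 * (n : ℝ) - 4) • Jmat n := by
  ext u v
  rw [Matrix.mul_apply]
  simp only [Jmat, Matrix.of_apply, Matrix.smul_apply, smul_eq_mul, mul_one, one_mul,
    SimpleGraph.adjMatrix_apply]
  rw [← deg_real hn v, Finset.card_filter]
  push_cast
  apply Finset.sum_congr rfl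
  intro w _
  by_cases h : (triangularGraph n).Adj v w
  · rw [if_pos h.symm, if_pos h]
  · rw [if_neg (fun hc => h hc.symm), if_neg h]

lemma J_mul_J (hn : 4 ≤ n) :
    Jmat n * Jmat n = ((n : ℝ) * ((n : ℝ) - 1) / 2) • Jmat n := by
  ext u v
  rw [Matrix.mul_apply]
  simp only [Jmat, Matrix.of_apply, Matrix.smul_apply, smul_eq_mul, mul_one]
  rw [Finset.sum_const, Finset.card_univ, card_V_eq]
  rw [nsmul_eq_mul, Nat.cast_choose_two]
  ring

lemma key1 (hn : 4 ≤ n) :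
    distMatrix (triangularGraph n) * distMatrix (triangularGraph n)
        + ((n : ℝ) - 2) • distMatrix (triangularGraph n)
      = (2 * ((n : ℝ) - 2) ^ 2) • Jmat n := by
  rw [distMatrix_eq hn]
  simp only [sub_mul, mul_sub, smul_mul_assoc, mul_smul_comm, one_mul, mul_one,
    A_sq hn, A_mul_J hn, J_mul_A hn, J_mul_J hn]
  have hn' : (4 : ℝ) ≤ (n : ℝ) := by exact_mod_cast hn
  module

lemma key2 (hn : 4 ≤ n) :
    distMatrix (triangularGraph n) * Jmat n
      = (((n : ℝ) - 1) * ((n : ℝ) - 2)) • Jmat n := by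
  rw [distMatrix_eq hn]
  simp only [sub_mul, smul_mul_assoc, one_mul, A_mul_J hn, J_mul_J hn]
  module

lemma trace_D : (distMatrix (triangularGraph n)).trace = 0 := by
  simp [Matrix.trace, distMatrix, Matrix.diag, SimpleGraph.dist_self]

lemma trace_J (hn : 4 ≤ n) : (Jmat n).trace = (n : ℝ) * ((n : ℝ) - 1) / 2 := by
  simp only [Matrix.trace, Matrix.diag, Jmat, Matrix.of_apply]
  rw [Finset.sum_const, Finset.card_univ, card_V_eq, nsmul_eq_mul, Nat.cast_choose_two]
  ring

lemma trace_DD (hn : 4 ≤ n) :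
    (distMatrix (triangularGraph n) * distMatrix (triangularGraph n)).trace
      = (n : ℝ) * ((n : ℝ) - 1) * ((n : ℝ) - 2) ^ 2 := by
  have h := congrArg Matrix.trace (key1 hn)
  rw [Matrix.trace_add, Matrix.trace_smul, Matrix.trace_smul, trace_D, trace_J hn] at h
  simp only [smul_eq_mul, mul_zero, add_zero] at h
  rw [h]
  ring

end TG
-- chunk 5: spectral lemmas
namespace TG
open Finset Matrix

variable {m : Type*} [Fintype m] [DecidableEq m]

lemma sum_eigenvalues_eq_trace (B : Matrix m m ℝ) (hB : B.IsHermitian) :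
    ∑ i, hB.eigenvalues i = B.trace := by
  have hU : (hB.eigenvectorUnitary : Matrix m m ℝ) * star (hB.eigenvectorUnitary : Matrix m m ℝ)
      = 1 := (Matrix.mem_unitaryGroup_iff).mp (hB.eigenvectorUnitary).2
  have h := hB.conjStarAlgAut_star_eigenvectorUnitary
  simp only [Unitary.conjStarAlgAut_star_apply, Unitary.coe_star] at h
  have ht := congrArg Matrix.trace h
  rw [Matrix.trace_mul_cycle, hU, Matrix.one_mul, Matrix.trace_diagonal] at ht
  simpa using ht.symm
  
lemma sum_eigenvalues_sq_eq_trace (B : Matrix m m ℝ) (hB : B.IsHermitian) :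
    ∑ i, (hB.eigenvalues i) ^ 2 = (B * B).trace := by
  set U := (hB.eigenvectorUnitary : Matrix m m ℝ) with hUdef
  have hU : U * star U = 1 := (Matrix.mem_unitaryGroup_iff).mp (hB.eigenvectorUnitary).2
  have h := hB.conjStarAlgAut_star_eigenvectorUnitary
  simp only [Unitary.conjStarAlgAut_star_apply, Unitary.coe_star] at h
  have h2 : Matrix.diagonal (RCLike.ofReal ∘ hB.eigenvalues)
        * Matrix.diagonal (RCLike.ofReal ∘ hB.eigenvalues)
      = star U * (B * B) * U := by
    rw [← h]
    calc (star U * B * U) * (star U * B * U)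
        = star U * B * ((U * star U) * (B * U)) := by
          simp only [Matrix.mul_assoc]
      _ = star U * (B * B) * U := by
          rw [hU, Matrix.one_mul]
          simp only [Matrix.mul_assoc]
  have ht := congrArg Matrix.trace h2
  rw [Matrix.trace_mul_cycle, ← Matrix.mul_assoc, hU, Matrix.one_mul,
    Matrix.diagonal_mul_diagonal, Matrix.trace_diagonal] at ht
  rw [← ht]
  apply Finset.sum_congr rfl
  intro i _
  simp [pow_two]

lemma eigenvalue_smul_cancel (B : Matrix m m ℝ) (hB : B.IsHermitian) (i : m)
    {x y : ℝ} (h : x • ⇑(hB.eigenvectorBasis i) = y • ⇑(hB.eigenvectorBasis i)) : x = y := by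
  have hne : (hB.eigenvectorBasis i) ≠ 0 := hB.eigenvectorBasis.toBasis.ne_zero i
  by_contra hxy
  have hsub : x - y ≠ 0 := sub_ne_zero.2 hxy
  apply hne
  have h' : (x - y) • ⇑(hB.eigenvectorBasis i) = 0 := by
    rw [sub_smul, h, sub_self]
  ext j
  have hj := congrFun h' j
  simp only [Pi.smul_apply, smul_eq_mul, Pi.zero_apply] at hj
  have hz : ⇑(hB.eigenvectorBasis i) j = 0 := by
    rcases mul_eq_zero.1 hj with h0 | h0
    · exact absurd h0 hsub
    · exact h0
  simpa using hz

end TG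
-- chunk 6: eigenvalue roots
namespace TG
open Finset Matrix

variable {n : ℕ}

lemma eigen_root (hn : 4 ≤ n) (i : V n) :
    (distMatrix_isHermitian (triangularGraph n)).eigenvalues i = ((n : ℝ) - 1) * ((n : ℝ) - 2)
      ∨ (distMatrix_isHermitian (triangularGraph n)).eigenvalues i = -((n : ℝ) - 2)
      ∨ (distMatrix_isHermitian (triangularGraph n)).eigenvalues i = 0 := by
  set hA := distMatrix_isHermitian (triangularGraph n) with hAdef
  set D := distMatrix (triangularGraph n) with hD
  set w : V n → ℝ := ⇑(hA.eigenvectorBasis i) with hw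
  set μ := hA.eigenvalues i with hmu
  set a : ℝ := ((n : ℝ) - 1) * ((n : ℝ) - 2) with hadef
  have h1 : D *ᵥ w = μ • w := hA.mulVec_eigenvectorBasis i
  have e1 : (μ * μ + ((n : ℝ) - 2) * μ) • w = (2 * ((n : ℝ) - 2) ^ 2) • (Jmat n *ᵥ w) := by
    have h := congrArg (fun M => M *ᵥ w) (key1 hn)
    simp only [Matrix.add_mulVec, Matrix.smul_mulVec, ← Matrix.mulVec_mulVec] at h
    rw [h1, Matrix.mulVec_smul, h1] at h
    rw [← h]
    rw [smul_smul, add_smul, smul_smul]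
  have e2 : D *ᵥ (Jmat n *ᵥ w) = a • (Jmat n *ᵥ w) := by
    rw [Matrix.mulVec_mulVec, key2 hn, Matrix.smul_mulVec]
  have e3 : (μ * (μ * μ + ((n : ℝ) - 2) * μ)) • w = (a * (μ * μ + ((n : ℝ) - 2) * μ)) • w := by
    have h := congrArg (fun x => D *ᵥ x) e1
    simp only [Matrix.mulVec_smul] at h
    rw [h1, e2] at h
    simp only [smul_smul] at h
    have h4 := congrArg (fun x => a • x) e1
    simp only [smul_smul] at h4
    calc (μ * (μ * μ + ((n : ℝ) - 2) * μ)) • w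
        = ((μ * μ + ((n : ℝ) - 2) * μ) * μ) • w := by rw [mul_comm]
      _ = (2 * ((n : ℝ) - 2) ^ 2 * a) • (Jmat n *ᵥ w) := h
      _ = (a * (2 * ((n : ℝ) - 2) ^ 2)) • (Jmat n *ᵥ w) := by rw [mul_comm]
      _ = (a * (μ * μ + ((n : ℝ) - 2) * μ)) • w := h4.symm
  have hsc : μ * (μ * μ + ((n : ℝ) - 2) * μ) = a * (μ * μ + ((n : ℝ) - 2) * μ) :=
    eigenvalue_smul_cancel _ hA i e3
  have hfac : (μ - a) * (μ + ((n : ℝ) - 2)) * μ = 0 := by linear_combination hsc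
  rcases mul_eq_zero.1 hfac with h | h
  · rcases mul_eq_zero.1 h with h' | h'
    · exact Or.inl (by linarith [sub_eq_zero.1 h'])
    · exact Or.inr (Or.inl (by linarith))
  · exact Or.inr (Or.inr h)

end TG

open Finset in
set_option maxHeartbeats 1000000 in
/-- For `n ≥ 4`, the distance matrix of `Tₙ` has eigenvalue `(n−1)(n−2)` with
multiplicity `1`, eigenvalue `−(n−2)` with multiplicity `n−1`, and eigenvalue `0` with
multiplicity `C(n,2) − n`. -/
theorem triangular_distMatrix_spectrum (n : ℕ) (hn : 4 ≤ n) :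
    (Finset.univ.filter fun i =>
        (distMatrix_isHermitian (triangularGraph n)).eigenvalues i =
          ((n : ℝ) - 1) * ((n : ℝ) - 2)).card = 1 ∧
      (Finset.univ.filter fun i =>
        (distMatrix_isHermitian (triangularGraph n)).eigenvalues i =
          -((n : ℝ) - 2)).card = n - 1 ∧
      (Finset.univ.filter fun i =>
        (distMatrix_isHermitian (triangularGraph n)).eigenvalues i = 0).card =
          n.choose 2 - n := by
  classical
  have hn' : (4 : ℝ) ≤ (n : ℝ) := by exact_mod_cast hn
  set a : ℝ := ((n : ℝ) - 1) * ((n : ℝ) - 2) with hadef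
  set b : ℝ := -((n : ℝ) - 2) with hbdef
  set hA := distMatrix_isHermitian (triangularGraph n) with hAdef
  set f := hA.eigenvalues with hfdef
  have hroot : ∀ i, f i = a ∨ f i = b ∨ f i = 0 := fun i => TG.eigen_root hn i
  have hab : a ≠ b := by intro h; rw [hadef, hbdef] at h; nlinarith
  have ha0 : a ≠ 0 := by intro h; rw [hadef] at h; nlinarith
  have hb0 : b ≠ 0 := by intro h; rw [hbdef] at h; nlinarith
  set s1 := Finset.univ.filter fun i => f i = a with hs1def
  set s2 := Finset.univ.filter fun i => f i = b with hs2def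
  set s3 := Finset.univ.filter fun i => f i = 0 with hs3def
  -- the second filter inside the first one is s2, third is s3
  have e2 : (Finset.univ.filter fun i => ¬ f i = a).filter (fun i => f i = b) = s2 := by
    rw [Finset.filter_filter, hs2def]
    apply Finset.filter_congr
    intro i _
    constructor
    · exact fun h => h.2
    · exact fun h => ⟨fun h' => hab (h'.symm.trans h), h⟩
  have e3 : ((Finset.univ.filter fun i => ¬ f i = a).filter fun i => ¬ f i = b) = s3 := by
    rw [Finset.filter_filter, hs3def]
    ext i
    simp only [Finset.mem_filter, Finset.mem_univ, true_and]
    constructor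
    · rintro ⟨h1, h2⟩
      rcases hroot i with h | h | h
      · exact absurd h h1
      · exact absurd h h2
      · exact h
    · intro h
      exact ⟨fun h' => ha0 (h'.symm.trans h), fun h' => hb0 (h'.symm.trans h)⟩
  have hcard : s1.card + (s2.card + s3.card) = Fintype.card (TG.V n) := by
    have hp1 := Finset.card_filter_add_card_filter_not
      (s := Finset.univ) (p := fun i => f i = a)
    have hp2 := Finset.card_filter_add_card_filter_not
      (s := Finset.univ.filter fun i => ¬ f i = a) (p := fun i => f i = b)
    rw [e2, e3] at hp2
    rw [← Finset.card_univ, ← hp1, ← hp2, hs1def]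
  have hsum : ∀ g : ℝ → ℝ, g 0 = 0 →
      ∑ i, g (f i) = s1.card • g a + s2.card • g b := by
    intro g hg0
    rw [← Finset.sum_filter_add_sum_filter_not Finset.univ (fun i => f i = a) (fun i => g (f i)),
      ← Finset.sum_filter_add_sum_filter_not (Finset.univ.filter fun i => ¬ f i = a)
        (fun i => f i = b) (fun i => g (f i)), e2, e3]
    have t1 : ∑ i ∈ s1, g (f i) = s1.card • g a := by
      rw [Finset.sum_congr rfl (fun i hi => by
        rw [(Finset.mem_filter.1 hi).2]), Finset.sum_const]
    have t2 : ∑ i ∈ s2, g (f i) = s2.card • g b := by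
      rw [Finset.sum_congr rfl (fun i hi => by
        rw [(Finset.mem_filter.1 hi).2]), Finset.sum_const]
    have t3 : ∑ i ∈ s3, g (f i) = 0 := by
      rw [Finset.sum_congr rfl (fun i hi => by
        rw [(Finset.mem_filter.1 hi).2, hg0]), Finset.sum_const, smul_zero]
    rw [hs1def] at t1
    rw [t1, t2, t3, add_zero]
  have hsum1 : ∑ i, f i = (s1.card : ℝ) * a + (s2.card : ℝ) * b := by
    have := hsum id rfl
    simpa [nsmul_eq_mul] using this
  have hsum2 : ∑ i, (f i) ^ 2 = (s1.card : ℝ) * a ^ 2 + (s2.card : ℝ) * b ^ 2 := by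
    have := hsum (fun x => x ^ 2) (by norm_num)
    simpa [nsmul_eq_mul] using this
  have tr1 : ∑ i, f i = 0 := by
    rw [hfdef, TG.sum_eigenvalues_eq_trace _ hA, TG.trace_D]
  have tr2 : ∑ i, (f i) ^ 2 = (n : ℝ) * ((n : ℝ) - 1) * ((n : ℝ) - 2) ^ 2 := by
    rw [hfdef, TG.sum_eigenvalues_sq_eq_trace _ hA, TG.trace_DD hn]
  have E1 : (s1.card : ℝ) * a + (s2.card : ℝ) * b = 0 := by rw [← hsum1, tr1]
  have E2 : (s1.card : ℝ) * a ^ 2 + (s2.card : ℝ) * b ^ 2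
      = (n : ℝ) * ((n : ℝ) - 1) * ((n : ℝ) - 2) ^ 2 := by rw [← hsum2, tr2]
  have E0 : (s1.card : ℝ) + (s2.card : ℝ) + (s3.card : ℝ) = (n : ℝ) * ((n : ℝ) - 1) / 2 := by
    have : ((s1.card + (s2.card + s3.card) : ℕ) : ℝ) = ((Fintype.card (TG.V n) : ℕ) : ℝ) := by
      exact_mod_cast congrArg (fun k : ℕ => (k : ℝ)) hcard
    rw [TG.card_V_eq, Nat.cast_choose_two] at this
    push_cast at this
    linarith
  have hn2 : (n : ℝ) - 2 ≠ 0 := by linarith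
  have hc2 : (s2.card : ℝ) = ((n : ℝ) - 1) * (s1.card : ℝ) := by
    have h : ((n : ℝ) - 2) * (s2.card : ℝ) = ((n : ℝ) - 2) * (((n : ℝ) - 1) * (s1.card : ℝ)) := by
      rw [hadef, hbdef] at E1
      linear_combination (-1 : ℝ) * E1
    exact mul_left_cancel₀ hn2 h
  have hT0 : (n : ℝ) * ((n : ℝ) - 1) * ((n : ℝ) - 2) ^ 2 ≠ 0 := by
    have h1 : (0 : ℝ) < (n : ℝ) := by linarith
    have h2 : (0 : ℝ) < (n : ℝ) - 1 := by linarith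
    have h3 : (0 : ℝ) < ((n : ℝ) - 2) ^ 2 := by nlinarith
    exact ne_of_gt (mul_pos (mul_pos h1 h2) h3)
  have hc1 : (s1.card : ℝ) = 1 := by
    have h : ((n : ℝ) * ((n : ℝ) - 1) * ((n : ℝ) - 2) ^ 2) * (s1.card : ℝ)
        = ((n : ℝ) * ((n : ℝ) - 1) * ((n : ℝ) - 2) ^ 2) * 1 := by
      rw [hadef, hbdef] at E2
      linear_combination E2 - (((n : ℝ) - 2) ^ 2) * hc2
    simpa using mul_left_cancel₀ hT0 h
  have hc2' : (s2.card : ℝ) = (n : ℝ) - 1 := by rw [hc2, hc1, mul_one]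
  have hc3 : (s3.card : ℝ) = (n : ℝ) * ((n : ℝ) - 1) / 2 - (n : ℝ) := by
    have h2 : (s2.card : ℝ) = (n : ℝ) - 1 := hc2'
    linarith [E0, hc1, h2]
  refine ⟨?_, ?_, ?_⟩
  · exact_mod_cast hc1
  · have : (s2.card : ℝ) = ((n - 1 : ℕ) : ℝ) := by
      rw [hc2', Nat.cast_sub (by omega)]
      norm_num
    exact_mod_cast this
  · have hle : n ≤ n.choose 2 := by
      have : (n : ℝ) ≤ ((n.choose 2 : ℕ) : ℝ) := by
        rw [Nat.cast_choose_two]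
        nlinarith
      exact_mod_cast this
    have : (s3.card : ℝ) = ((n.choose 2 - n : ℕ) : ℝ) := by
      rw [hc3, Nat.cast_sub hle, Nat.cast_choose_two]
    exact_mod_cast this
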